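/- Assume the PACA setting with the Slater condition. If the PACA sequence (xᵏ) is infinite (xᵏ ∉ C for every k), then the sequence of perturbation parameters is summable: Σ_{k=0}^∞ ε_k < ∞. -/

import Mathlib

open Filter
open scoped RealInnerProductSpace

set_option maxHeartbeats 1000000

theorem stmt_18 {n m : ℕ} (hm : 0 < m)
    (f : Fin m → EuclideanSpace ℝ (Fin n) → ℝ)
    (hconv : ∀ i, ConvexOn ℝ Set.univ (f i))
    (xhat : EuclideanSpace ℝ (Fin n)) (hslater : ∀ i, f i xhat < 0)
    (ε : ℕ → ℝ) (hεpos : ∀ k, 0 < ε k) (hεanti : StrictAnti ε)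
    (hεlim : Tendsto ε atTop (nhds 0))
    (x : ℕ → EuclideanSpace ℝ (Fin n))
    (u v : Fin m → ℕ → EuclideanSpace ℝ (Fin n))
    (w : ℕ → EuclideanSpace ℝ (Fin n))
    (hsub : ∀ i k, ∀ z, f i (x k) + ⟪u i k, z - x k⟫ ≤ f i z)
    (hune : ∀ i k, 0 < f i (x k) + ε k → u i k ≠ 0)
    (hv : ∀ i k, v i k = (max 0 (f i (x k) + ε k) / ‖u i k‖ ^ 2) • u i k)
    (hw : ∀ k, w k = (m : ℝ)⁻¹ • ∑ i, v i k)
    (hstep0 : ∀ k, w k = 0 → x (k + 1) = x k)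
    (hstep : ∀ k, w k ≠ 0 →
      x (k + 1) = x k - (((m : ℝ)⁻¹ * ∑ i, ‖v i k‖ ^ 2) / ‖w k‖ ^ 2) • w k)
    (hinfinite : ∀ k, ∃ i, 0 < f i (x k)) :
    Summable ε := by
  classical
  haveI : Nonempty (Fin m) := ⟨⟨0, hm⟩⟩
  have hmpos : (0 : ℝ) < m := by exact_mod_cast hm
  -- Slater margin δ
  obtain ⟨δ, hδpos, hδ⟩ : ∃ δ > 0, ∀ i, f i xhat ≤ -δ := by
    refine ⟨Finset.univ.inf' Finset.univ_nonempty (fun i => -(f i xhat)), ?_, ?_⟩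
    · exact (Finset.lt_inf'_iff _).2 fun i _ => by linarith [hslater i]
    · intro i
      have h := Finset.inf'_le (fun i => -(f i xhat)) (Finset.mem_univ i)
      linarith [h]
  -- index after which ε k ≤ δ/2
  obtain ⟨K, hK⟩ : ∃ K, ∀ k ≥ K, ε k ≤ δ / 2 := by
    have h := hεlim.eventually (gt_mem_nhds (show (0:ℝ) < δ/2 by linarith))
    obtain ⟨K, hK⟩ := eventually_atTop.mp h
    exact ⟨K, fun k hk => (hK k hk).le⟩
  set R := ‖x K - xhat‖ with hR
  have hRnn : 0 ≤ R := norm_nonneg _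
  -- continuity of the fᵢ and a bound A on |fᵢ| over the ball of radius R+1
  have hfc : ∀ i, Continuous (f i) := fun i => by
    rw [← continuousOn_univ]
    exact (hconv i).continuousOn isOpen_univ
  set g : EuclideanSpace ℝ (Fin n) → ℝ := fun p => ∑ i, |f i p| with hg
  have hgc : Continuous g := continuous_finset_sum _ fun i _ => (hfc i).abs
  obtain ⟨p₀, hp₀mem, hp₀⟩ := (isCompact_closedBall xhat (R+1)).exists_isMaxOn
    ⟨xhat, Metric.mem_closedBall_self (by linarith)⟩ hgc.continuousOn
  set A := g p₀ with hA
  have hfg : ∀ i p, |f i p| ≤ g p := by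
    intro i p
    simp only [hg]
    exact Finset.single_le_sum (f := fun j => |f j p|) (fun j _ => abs_nonneg _)
      (Finset.mem_univ i)
  set M : ℝ := max 1 (2*A) with hM
  have hM1 : (1:ℝ) ≤ M := le_max_left _ _
  have hMpos : (0:ℝ) < M := lt_of_lt_of_le one_pos hM1
  -- subgradient bound on the ball
  have hMprop : ∀ k, ‖x k - xhat‖ ≤ R → ∀ i, ‖u i k‖ ≤ M := by
    intro k hk i
    by_cases hu : u i k = 0
    · rw [hu, norm_zero]; linarith
    · have ht : 0 < ‖u i k‖ := norm_pos_iff.mpr hu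
      set z := x k + (‖u i k‖)⁻¹ • u i k with hz
      have hzx : z - x k = (‖u i k‖)⁻¹ • u i k := by rw [hz]; abel
      have hinnz : ⟪u i k, z - x k⟫ = ‖u i k‖ := by
        rw [hzx, real_inner_smul_right, real_inner_self_eq_norm_mul_norm,
          inv_mul_cancel_left₀ ht.ne']
      have h1 := hsub i k z
      rw [hinnz] at h1
      have hzB : z ∈ Metric.closedBall xhat (R+1) := by
        rw [Metric.mem_closedBall, dist_eq_norm, hz]
        calc ‖x k + (‖u i k‖)⁻¹ • u i k - xhat‖
            ≤ ‖x k - xhat‖ + ‖(‖u i k‖)⁻¹ • u i k‖ := by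
              rw [add_sub_right_comm]; exact norm_add_le _ _
          _ ≤ R + 1 := by
              rw [norm_smul, norm_inv, norm_norm, inv_mul_cancel₀ ht.ne']
              linarith
      have hxB : x k ∈ Metric.closedBall xhat (R+1) := by
        rw [Metric.mem_closedBall, dist_eq_norm]; linarith
      have h2 : f i z ≤ A := le_trans (le_trans (le_abs_self _) (hfg i z)) (hp₀ hzB)
      have h3 : -A ≤ f i (x k) :=
        (abs_le.mp ((hfg i (x k)).trans (hp₀ hxB))).1
      have h4 : (2*A : ℝ) ≤ M := le_max_right _ _
      linarith
  -- the multipliers λᵢᵏ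
  set lam : Fin m → ℕ → ℝ := fun i k => max 0 (f i (x k) + ε k) / ‖u i k‖ ^ 2 with hlam
  have hlamnn : ∀ i k, 0 ≤ lam i k := fun i k =>
    div_nonneg (le_max_left _ _) (by positivity)
  have hvlam : ∀ i k, v i k = lam i k • u i k := fun i k => hv i k
  have hvsq : ∀ i k, ‖v i k‖ ^ 2 = lam i k * max 0 (f i (x k) + ε k) := by
    intro i k
    rw [hvlam, norm_smul, Real.norm_eq_abs, mul_pow, sq_abs]
    by_cases hu : u i k = 0
    · simp [hlam, hu]
    · have h2 : (‖u i k‖ : ℝ) ^ 2 ≠ 0 := pow_ne_zero _ (norm_ne_zero_iff.mpr hu)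
      rw [hlam]
      field_simp
  set c : ℝ := δ / (m * M ^ 2) with hc
  have hcpos : 0 < c := by positivity
  -- key per-step decrease
  have key : ∀ k, K ≤ k → ‖x k - xhat‖ ≤ R →
      ‖x (k+1) - xhat‖ ^ 2 ≤ ‖x k - xhat‖ ^ 2 - c * ε k := by
    intro k hkK hkR
    have hεk : ε k ≤ δ / 2 := hK k hkK
    have hMk : ∀ i, ‖u i k‖ ≤ M := hMprop k hkR
    -- per-coordinate inner bound
    have hinner : ∀ i, ‖v i k‖ ^ 2 + lam i k * (δ - ε k) ≤ ⟪v i k, x k - xhat⟫ := by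
      intro i
      by_cases hpos : 0 < f i (x k) + ε k
      · have humem := hune i k hpos
        have hu2 : (0:ℝ) < ‖u i k‖ ^ 2 := by
          have := norm_pos_iff.mpr humem; positivity
        have hmax : max 0 (f i (x k) + ε k) = f i (x k) + ε k := max_eq_right hpos.le
        have hlamval : lam i k * ‖u i k‖ ^ 2 = f i (x k) + ε k := by
          rw [hlam]; field_simp; exact hmax
        have hs := hsub i k xhat
        have h4 : ⟪u i k, xhat - x k⟫ = -⟪u i k, x k - xhat⟫ := by
          rw [← inner_neg_right]; congr 1; abel
        have hi1 : f i (x k) + δ ≤ ⟪u i k, x k - xhat⟫ := by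
          have := hδ i
          rw [h4] at hs
          linarith
        have hlampos : 0 ≤ lam i k := hlamnn i k
        have h5 : lam i k * (f i (x k) + δ) ≤ lam i k * ⟪u i k, x k - xhat⟫ :=
          mul_le_mul_of_nonneg_left hi1 hlampos
        have h6 : ⟪v i k, x k - xhat⟫ = lam i k * ⟪u i k, x k - xhat⟫ := by
          rw [hvlam, real_inner_smul_left]
        have h7 : ‖v i k‖ ^ 2 = lam i k * (f i (x k) + ε k) := by
          rw [hvsq, hmax]
        rw [h6, h7]
        nlinarith
      · have hmax : max 0 (f i (x k) + ε k) = 0 := max_eq_left (not_lt.mp hpos)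
        have hlam0 : lam i k = 0 := by rw [hlam]; simp [hmax]
        have hv0 : v i k = 0 := by rw [hvlam, hlam0, zero_smul]
        simp [hv0, hlam0]
    set S := (m:ℝ)⁻¹ * ∑ i, ‖v i k‖ ^ 2 with hS
    set L := (m:ℝ)⁻¹ * ∑ i, lam i k with hL
    have hSnn : 0 ≤ S := by
      apply mul_nonneg (by positivity)
      exact Finset.sum_nonneg fun i _ => sq_nonneg _
    have hLnn : 0 ≤ L := by
      apply mul_nonneg (by positivity)
      exact Finset.sum_nonneg fun i _ => hlamnn i k
    -- aggregated inner bound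
    have hwin : S + (δ - ε k) * L ≤ ⟪w k, x k - xhat⟫ := by
      have hsumle : ∑ i, (‖v i k‖ ^ 2 + lam i k * (δ - ε k)) ≤
          ∑ i, ⟪v i k, x k - xhat⟫ := Finset.sum_le_sum fun i _ => hinner i
      rw [Finset.sum_add_distrib, ← Finset.sum_mul] at hsumle
      have hmul := mul_le_mul_of_nonneg_left hsumle
        (inv_nonneg.mpr hmpos.le)
      rw [hw, real_inner_smul_left, sum_inner]
      rw [hS, hL]
      nlinarith [hmul]
    -- lower bound on L
    obtain ⟨i₀, hi₀⟩ := hinfinite k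
    have hlami₀ : ε k / M ^ 2 ≤ lam i₀ k := by
      have hpos : 0 < f i₀ (x k) + ε k := by linarith [hεpos k]
      have humem := hune i₀ k hpos
      have hu2 : (0:ℝ) < ‖u i₀ k‖ ^ 2 := by
        have := norm_pos_iff.mpr humem; positivity
      have hup : ‖u i₀ k‖ ^ 2 ≤ M ^ 2 := pow_le_pow_left₀ (norm_nonneg _) (hMk i₀) 2
      rw [hlam]
      simp only [max_eq_right hpos.le]
      exact div_le_div₀ hpos.le (by linarith [hεpos k]) hu2 hup
    have hLlb : ε k / (m * M ^ 2) ≤ L := by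
      have hsum : ε k / M ^ 2 ≤ ∑ i, lam i k :=
        le_trans hlami₀ (Finset.single_le_sum (fun i _ => hlamnn i k) (Finset.mem_univ i₀))
      have h8 : (m:ℝ)⁻¹ * (ε k / M ^ 2) ≤ L :=
        mul_le_mul_of_nonneg_left hsum (inv_nonneg.mpr hmpos.le)
      have h9 : ε k / (m * M ^ 2) = (m:ℝ)⁻¹ * (ε k / M ^ 2) := by
        field_simp
      linarith [h8, h9.ge, h9.le]
    -- w k ≠ 0
    have hwne : w k ≠ 0 := by
      intro h0
      rw [h0, inner_zero_left] at hwin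
      have hd1 : 0 < δ - ε k := by linarith
      have hd2 : 0 < ε k / (m * M ^ 2) :=
        div_pos (hεpos k) (mul_pos hmpos (pow_pos hMpos 2))
      have hd3 := mul_pos hd1 (lt_of_lt_of_le hd2 hLlb)
      linarith
    have hw2 : (0:ℝ) < ‖w k‖ ^ 2 := by
      have := norm_pos_iff.mpr hwne; positivity
    set α := S / ‖w k‖ ^ 2 with hα
    have hx1 : x (k+1) - xhat = (x k - xhat) - α • w k := by
      rw [hstep k hwne, ← hS, ← hα]; abel
    have hexp : ‖x (k+1) - xhat‖ ^ 2 =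
        ‖x k - xhat‖ ^ 2 - 2 * α * ⟪w k, x k - xhat⟫ + α ^ 2 * ‖w k‖ ^ 2 := by
      rw [hx1, norm_sub_sq_real, real_inner_smul_right, norm_smul, Real.norm_eq_abs, mul_pow, sq_abs,
        real_inner_comm]
      ring
    -- ‖w‖² ≤ S
    have hcs : ‖w k‖ ^ 2 ≤ S := by
      have h1 : ‖w k‖ ≤ (m:ℝ)⁻¹ * ∑ i, ‖v i k‖ := by
        rw [hw, norm_smul]
        have : ‖(m:ℝ)⁻¹‖ = (m:ℝ)⁻¹ := by
          rw [Real.norm_eq_abs, abs_of_nonneg (inv_nonneg.mpr hmpos.le)]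
        rw [this]
        exact mul_le_mul_of_nonneg_left (norm_sum_le _ _) (inv_nonneg.mpr hmpos.le)
      have h2 : (∑ i, ‖v i k‖) ^ 2 ≤ (m:ℝ) * ∑ i, ‖v i k‖ ^ 2 := by
        have h := sq_sum_le_card_mul_sum_sq (s := (Finset.univ : Finset (Fin m)))
          (f := fun i => ‖v i k‖)
        simpa [Finset.card_univ] using h
      calc ‖w k‖ ^ 2 ≤ ((m:ℝ)⁻¹ * ∑ i, ‖v i k‖) ^ 2 :=
            pow_le_pow_left₀ (norm_nonneg _) h1 2
        _ = (m:ℝ)⁻¹ * (m:ℝ)⁻¹ * (∑ i, ‖v i k‖) ^ 2 := by ring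
        _ ≤ (m:ℝ)⁻¹ * (m:ℝ)⁻¹ * ((m:ℝ) * ∑ i, ‖v i k‖ ^ 2) := by
            apply mul_le_mul_of_nonneg_left h2 (by positivity)
        _ = S := by rw [hS]; field_simp
    have hα1 : 1 ≤ α := (one_le_div hw2).mpr hcs
    have hαS : α * ‖w k‖ ^ 2 = S := div_mul_cancel₀ _ hw2.ne'
    have hαSq : α ^ 2 * ‖w k‖ ^ 2 = α * S := by rw [sq, mul_assoc, hαS]
    have h10 : 2 * α * (S + (δ - ε k) * L) ≤ 2 * α * ⟪w k, x k - xhat⟫ :=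
      mul_le_mul_of_nonneg_left hwin (by linarith)
    have h11 : 0 ≤ α * S := mul_nonneg (by linarith) hSnn
    have h12 : 1 * ((δ/2) * (ε k / (m * M ^ 2))) ≤ α * ((δ - ε k) * L) := by
      have ha : (δ/2) * (ε k / (m * M ^ 2)) ≤ (δ - ε k) * L := by
        have hb : (δ/2) * (ε k / (m * M ^ 2)) ≤ (δ - ε k) * (ε k / (m * M ^ 2)) := by
          exact mul_le_mul_of_nonneg_right (by linarith)
            (div_pos (hεpos k) (mul_pos hmpos (pow_pos hMpos 2))).le
        have hbb : (δ - ε k) * (ε k / (m * M ^ 2)) ≤ (δ - ε k) * L :=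
          mul_le_mul_of_nonneg_left hLlb (by linarith)
        linarith
      have hnn : 0 ≤ (δ/2) * (ε k / (m * M ^ 2)) :=
        mul_nonneg (by linarith) (div_pos (hεpos k) (mul_pos hmpos (pow_pos hMpos 2))).le
      calc 1 * ((δ/2) * (ε k / (m * M ^ 2))) = (δ/2) * (ε k / (m * M ^ 2)) := one_mul _
        _ ≤ (δ - ε k) * L := ha
        _ ≤ α * ((δ - ε k) * L) := le_mul_of_one_le_left (by linarith [hnn]) hα1
    have hgoal : c * ε k = 2 * ((δ/2) * (ε k / (m * M ^ 2))) := by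
      rw [hc]; ring
    nlinarith [hexp, h10, h11, h12, hαSq]
  -- telescoping bound
  have bound : ∀ N, ‖x (K + N) - xhat‖ ^ 2 ≤
      R ^ 2 - c * ∑ j ∈ Finset.range N, ε (K + j) := by
    intro N
    induction N with
    | zero => simp [hR]
    | succ N ih =>
      have hsum_nn : 0 ≤ ∑ j ∈ Finset.range N, ε (K + j) :=
        Finset.sum_nonneg fun j _ => (hεpos _).le
      have h1 : ‖x (K + N) - xhat‖ ^ 2 ≤ R ^ 2 := by nlinarith [ih]
      have hxR : ‖x (K + N) - xhat‖ ≤ R := by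
        nlinarith [norm_nonneg (x (K + N) - xhat), hRnn]
      have hk := key (K + N) (Nat.le_add_right K N) hxR
      have he : K + (N + 1) = (K + N) + 1 := rfl
      rw [he, Finset.sum_range_succ]
      linarith [ih, hk]
  have hsum : ∀ N, ∑ j ∈ Finset.range N, ε (K + j) ≤ R ^ 2 / c := by
    intro N
    have h := bound N
    have h0 : (0:ℝ) ≤ ‖x (K + N) - xhat‖ ^ 2 := sq_nonneg _
    rw [le_div_iff₀ hcpos]
    nlinarith
  have hsummable : Summable (fun j => ε (K + j)) :=
    summable_of_sum_range_le (fun j => (hεpos _).le) hsum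
  have hsummable' : Summable (fun j => ε (j + K)) := by
    simpa [add_comm] using hsummable
  exact (summable_nat_add_iff K).mp hsummable'
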